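/- Abelianization of the Fox derivative sum: let q be even, ε_i ∈ {1,-1}, and let θ : ℤ[F] → ℤ[x^{±1}, y^{±1}] be the ring map sending a ↦ x, b ↦ y. Then θ(∂w/∂b) = Σ_{i=1}^{q/2} ε_{2i-1} x^{Σ_{j=1}^{i-1} ε_{2j}} y^{(ε_{2i-1}-1)/2 + Σ_{k=1}^{i-1} ε_{2k-1}}, where w = b^{ε_1}a^{ε_2}⋯b^{ε_{q-1}}. -/

import Mathlib

/-- Abelianization of the Fox derivative: `θ : ℤ[F] → ℤ[x^{±1},y^{±1}]` sends
`a ↦ x`, `b ↦ y`; applied to `∂w/∂b` it yields the 2-variable Alexander sum. -/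
theorem abelianized_fox_derivative
    (q : ℕ) (hq : Even q) (hq2 : 2 ≤ q) (ε : ℕ → ℤ)
    (hε : ∀ i, 1 ≤ i → i ≤ q - 1 → ε i = 1 ∨ ε i = -1)
    (letter : ℕ → FreeGroup Bool)
    (hletter : ∀ j, letter j =
      (if j % 2 = 1 then FreeGroup.of false else FreeGroup.of true) ^ ε j)
    (d : MonoidAlgebra ℤ (FreeGroup Bool) →ₗ[ℤ] MonoidAlgebra ℤ (FreeGroup Bool))
    (hdb : d (MonoidAlgebra.of ℤ (FreeGroup Bool) (FreeGroup.of false)) = 1)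
    (hda : d (MonoidAlgebra.of ℤ (FreeGroup Bool) (FreeGroup.of true)) = 0)
    (hprod : ∀ u v : FreeGroup Bool,
      d (MonoidAlgebra.of ℤ (FreeGroup Bool) (u * v))
        = d (MonoidAlgebra.of ℤ (FreeGroup Bool) u)
          + MonoidAlgebra.of ℤ (FreeGroup Bool) u
              * d (MonoidAlgebra.of ℤ (FreeGroup Bool) v))
    (θ : MonoidAlgebra ℤ (FreeGroup Bool) →+* AddMonoidAlgebra ℤ (ℤ × ℤ))
    (hθa : θ (MonoidAlgebra.of ℤ (FreeGroup Bool) (FreeGroup.of true))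
      = AddMonoidAlgebra.single (1, 0) 1)
    (hθb : θ (MonoidAlgebra.of ℤ (FreeGroup Bool) (FreeGroup.of false))
      = AddMonoidAlgebra.single (0, 1) 1) :
    θ (d (MonoidAlgebra.of ℤ (FreeGroup Bool)
        (((List.range (q - 1)).map (fun j => letter (j + 1))).prod)))
      = ∑ i ∈ Finset.Icc 1 (q / 2),
          AddMonoidAlgebra.single
            ((∑ j ∈ Finset.Icc 1 (i - 1), ε (2 * j)),
              ((ε (2 * i - 1) - 1) / 2 + ∑ k ∈ Finset.Icc 1 (i - 1), ε (2 * k - 1)))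
            (ε (2 * i - 1)) := by
  classical
  -- abbreviations
  set A := FreeGroup.of true with hA
  set B := FreeGroup.of false with hB
  -- cancellation helper in the Laurent algebra
  have cancel : ∀ (p : ℤ × ℤ) (X c : AddMonoidAlgebra ℤ (ℤ × ℤ)),
      AddMonoidAlgebra.single p 1 * X = c → X = AddMonoidAlgebra.single (-p) 1 * c := by
    intro p X c h
    rw [← h, ← mul_assoc, AddMonoidAlgebra.single_mul_single, neg_add_cancel, one_mul,
      ← AddMonoidAlgebra.one_def, one_mul]
  -- d 1 = 0
  have hd1 : d (1 : MonoidAlgebra ℤ (FreeGroup Bool)) = 0 := by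
    have h := hprod 1 1
    simp only [mul_one, map_one, one_mul] at h
    exact left_eq_add.mp h
  -- θ of b⁻¹
  have hθbinv : θ (MonoidAlgebra.of ℤ (FreeGroup Bool) B⁻¹)
      = AddMonoidAlgebra.single ((0 : ℤ), (-1 : ℤ)) 1 := by
    have h1 : AddMonoidAlgebra.single ((0:ℤ),(1:ℤ)) 1
        * θ (MonoidAlgebra.of ℤ (FreeGroup Bool) B⁻¹) = 1 := by
      rw [← hθb, ← map_mul, ← map_mul, mul_inv_cancel, map_one, map_one]
    have := cancel _ _ _ h1
    rw [this, mul_one]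
    norm_num
  -- θ of a⁻¹
  have hθainv : θ (MonoidAlgebra.of ℤ (FreeGroup Bool) A⁻¹)
      = AddMonoidAlgebra.single ((-1 : ℤ), (0 : ℤ)) 1 := by
    have h1 : AddMonoidAlgebra.single ((1:ℤ),(0:ℤ)) 1
        * θ (MonoidAlgebra.of ℤ (FreeGroup Bool) A⁻¹) = 1 := by
      rw [← hθa, ← map_mul, ← map_mul, mul_inv_cancel, map_one, map_one]
    have := cancel _ _ _ h1
    rw [this, mul_one]
    norm_num
  -- θ (d (of b⁻¹))
  have hθdbinv : θ (d (MonoidAlgebra.of ℤ (FreeGroup Bool) B⁻¹))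
      = AddMonoidAlgebra.single ((0 : ℤ), (-1 : ℤ)) (-1) := by
    have h := hprod B B⁻¹
    rw [mul_inv_cancel, map_one, hd1, hdb] at h
    have h2 : MonoidAlgebra.of ℤ (FreeGroup Bool) B
        * d (MonoidAlgebra.of ℤ (FreeGroup Bool) B⁻¹) = -1 := by
      exact eq_neg_of_add_eq_zero_right h.symm
    have h3 : AddMonoidAlgebra.single ((0:ℤ),(1:ℤ)) 1
        * θ (d (MonoidAlgebra.of ℤ (FreeGroup Bool) B⁻¹)) = -1 := by
      rw [← hθb, ← map_mul, h2, map_neg, map_one]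
    have := cancel _ _ _ h3
    simp only [this, mul_neg, mul_one, Prod.neg_mk, neg_zero, neg_neg]
    exact (AddMonoidAlgebra.single_neg _ _).symm
  -- θ (d (of a⁻¹))
  have hθdainv : θ (d (MonoidAlgebra.of ℤ (FreeGroup Bool) A⁻¹)) = 0 := by
    have h := hprod A A⁻¹
    rw [mul_inv_cancel, map_one, hd1, hda] at h
    have h2 : MonoidAlgebra.of ℤ (FreeGroup Bool) A
        * d (MonoidAlgebra.of ℤ (FreeGroup Bool) A⁻¹) = 0 := by
      rw [zero_add] at h; exact h.symm
    have h3 : AddMonoidAlgebra.single ((1:ℤ),(0:ℤ)) 1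
        * θ (d (MonoidAlgebra.of ℤ (FreeGroup Bool) A⁻¹)) = 0 := by
      rw [← hθa, ← map_mul, h2, map_zero]
    have := cancel _ _ _ h3
    rw [this, mul_zero]
  -- the four ±1-power evaluations
  have hθB : ∀ δ : ℤ, δ = 1 ∨ δ = -1 →
      θ (MonoidAlgebra.of ℤ (FreeGroup Bool) (B ^ δ))
        = AddMonoidAlgebra.single ((0 : ℤ), δ) 1 := by
    rintro δ (rfl | rfl)
    · rw [zpow_one, hθb]
    · rw [zpow_neg_one, hθbinv]
  have hθA : ∀ δ : ℤ, δ = 1 ∨ δ = -1 →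
      θ (MonoidAlgebra.of ℤ (FreeGroup Bool) (A ^ δ))
        = AddMonoidAlgebra.single (δ, (0 : ℤ)) 1 := by
    rintro δ (rfl | rfl)
    · rw [zpow_one, hθa]
    · rw [zpow_neg_one, hθainv]
  have hθdB : ∀ δ : ℤ, δ = 1 ∨ δ = -1 →
      θ (d (MonoidAlgebra.of ℤ (FreeGroup Bool) (B ^ δ)))
        = AddMonoidAlgebra.single ((0 : ℤ), (δ - 1) / 2) δ := by
    rintro δ (rfl | rfl)
    · rw [zpow_one, hdb, map_one]
      norm_num
      exact AddMonoidAlgebra.one_def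
    · rw [zpow_neg_one, hθdbinv]
      norm_num
  have hθdA : ∀ δ : ℤ, δ = 1 ∨ δ = -1 →
      θ (d (MonoidAlgebra.of ℤ (FreeGroup Bool) (A ^ δ))) = 0 := by
    rintro δ (rfl | rfl)
    · rw [zpow_one, hda, map_zero]
    · rw [zpow_neg_one, hθdainv]
  -- main induction
  have key : ∀ n : ℕ,
      (∀ i, 1 ≤ i → i ≤ 2 * n + 1 → ε i = 1 ∨ ε i = -1) →
      θ (MonoidAlgebra.of ℤ (FreeGroup Bool)
          (((List.range (2 * n + 1)).map (fun j => letter (j + 1))).prod))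
        = AddMonoidAlgebra.single
            ((∑ j ∈ Finset.Icc 1 n, ε (2 * j)),
              (∑ k ∈ Finset.Icc 1 (n + 1), ε (2 * k - 1))) 1
      ∧ θ (d (MonoidAlgebra.of ℤ (FreeGroup Bool)
          (((List.range (2 * n + 1)).map (fun j => letter (j + 1))).prod)))
        = ∑ i ∈ Finset.Icc 1 (n + 1),
            AddMonoidAlgebra.single
              ((∑ j ∈ Finset.Icc 1 (i - 1), ε (2 * j)),
                ((ε (2 * i - 1) - 1) / 2 + ∑ k ∈ Finset.Icc 1 (i - 1), ε (2 * k - 1)))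
              (ε (2 * i - 1)) := by
    intro n
    induction n with
    | zero =>
      intro h
      have hε1 := h 1 le_rfl le_rfl
      have hIcc0 : Finset.Icc 1 0 = (∅ : Finset ℕ) := by decide
      simp only [show List.range (2 * 0 + 1) = [0] from rfl, List.map_cons, List.map_nil,
        List.prod_cons, List.prod_nil, mul_one, Nat.zero_add,
        hletter 1, if_pos (by norm_num : 1 % 2 = 1), if_true, hIcc0, Finset.sum_empty,
        Finset.Icc_self, Finset.sum_singleton, show 2 * 1 - 1 = 1 from rfl,
        show (0 : ℕ) + 1 = 1 from rfl]
      refine ⟨?_, ?_⟩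
      · rw [hθB _ hε1]
      · rw [hθdB _ hε1]
        norm_num
    | succ n ih =>
      intro h
      obtain ⟨ihθ, ihd⟩ := ih (fun i h1 h2 => h i h1 (by omega))
      have hμ := h (2 * n + 2) (by omega) (by omega)
      have hν := h (2 * n + 3) (by omega) (by omega)
      have hrange : List.range (2 * (n + 1) + 1)
          = List.range (2 * n + 1) ++ [2 * n + 1] ++ [2 * n + 2] := by
        rw [show 2 * (n + 1) + 1 = (2 * n + 2) + 1 from by ring, List.range_succ,
          show 2 * n + 2 = (2 * n + 1) + 1 from by ring, List.range_succ]
      have hl2 : letter (2 * n + 1 + 1) = A ^ ε (2 * n + 2) := by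
        rw [show 2 * n + 1 + 1 = 2 * n + 2 from rfl, hletter,
          if_neg (by omega : ¬ (2 * n + 2) % 2 = 1)]
      have hl3 : letter (2 * n + 2 + 1) = B ^ ε (2 * n + 3) := by
        rw [show 2 * n + 2 + 1 = 2 * n + 3 from rfl, hletter,
          if_pos (by omega : (2 * n + 3) % 2 = 1)]
      simp only [hrange, List.map_append, List.prod_append, List.map_cons, List.map_nil,
        List.prod_cons, List.prod_nil, mul_one, hl2, hl3]
      set P := ((List.range (2 * n + 1)).map (fun j => letter (j + 1))).prod with hP
      constructor
      · rw [map_mul, map_mul, map_mul, map_mul, ihθ, hθA _ hμ, hθB _ hν,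
          AddMonoidAlgebra.single_mul_single, AddMonoidAlgebra.single_mul_single,
          Finset.sum_Icc_succ_top (by omega : 1 ≤ n + 1) (fun j => ε (2 * j)),
          show n + 1 + 1 = (n + 1) + 1 from rfl,
          Finset.sum_Icc_succ_top (by omega : 1 ≤ n + 1 + 1) (fun k => ε (2 * k - 1))]
        simp only [Prod.mk_add_mk, add_zero, zero_add, mul_one,
          show 2 * (n + 1) = 2 * n + 2 from by ring,
          show 2 * ((n + 1) + 1) - 1 = 2 * n + 3 from by omega]
      · rw [mul_assoc, hprod, map_add, map_mul, hprod, map_add, map_mul,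
          hθdA _ hμ, hθA _ hμ, hθdB _ hν, ihd, ihθ, zero_add,
          AddMonoidAlgebra.single_mul_single, AddMonoidAlgebra.single_mul_single,
          Finset.sum_Icc_succ_top (by omega : 1 ≤ n + 1 + 1)]
        simp only [Prod.mk_add_mk, add_zero, zero_add, mul_one, one_mul,
          show n + 1 + 1 - 1 = n + 1 from rfl,
          show 2 * (n + 1 + 1) - 1 = 2 * n + 3 from by omega]
        rw [Finset.sum_Icc_succ_top (by omega : 1 ≤ n + 1) (fun j => ε (2 * j)),
          show 2 * (n + 1) = 2 * n + 2 from by ring]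
        congr 2
        rw [Prod.mk.injEq]
        exact ⟨rfl, add_comm _ _⟩
  -- conclude
  obtain ⟨m, hm⟩ := hq
  have hm1 : 1 ≤ m := by omega
  have h1 : q - 1 = 2 * (m - 1) + 1 := by omega
  have h2 : q / 2 = (m - 1) + 1 := by omega
  rw [h1, h2]
  exact (key (m - 1) (fun i hi1 hi2 => hε i hi1 (by omega))).2
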